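/- On the round sphere S^n, for u ∈ C³(S^n) and 1 ≤ m ≤ n−1, the divergence of the Newton tensor of the Hessian satisfies ∇_j [T_m]^j_i(D²u) = −(n−m) u_j [T_{m−1}]^j_i(D²u). -/

import Mathlib

open scoped BigOperators

/-- Generalized Kronecker delta `δ^{J}_{I}` (fully antisymmetric in upper and lower indices). -/
noncomputable def gkdelta (n k : ℕ) (J I : Fin k → Fin n) : ℝ :=
  ∑ σ : Equiv.Perm (Fin k), ((Equiv.Perm.sign σ : ℤ) : ℝ) *
    ∏ a : Fin k, (if J (σ a) = I a then (1:ℝ) else 0)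

/-- `σ_k(A) = (1/k!) δ^{j_1…j_k}_{i_1…i_k} A^{i_1}_{j_1} ⋯ A^{i_k}_{j_k}`. -/
noncomputable def sigmaPoly (n k : ℕ) (A : Matrix (Fin n) (Fin n) ℝ) : ℝ :=
  (1 / (Nat.factorial k : ℝ)) *
    ∑ I : Fin k → Fin n, ∑ J : Fin k → Fin n,
      gkdelta n k J I * ∏ a : Fin k, A (I a) (J a)

/-- Newton transformation tensor `[T_k]^j_i(A) = (1/k!) δ^{j j_1…j_k}_{i i_1…i_k} A^{i_1}_{j_1}⋯A^{i_k}_{j_k}`. -/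
noncomputable def newtonT (n k : ℕ) (A : Matrix (Fin n) (Fin n) ℝ) (j i : Fin n) : ℝ :=
  (1 / (Nat.factorial k : ℝ)) *
    ∑ I : Fin k → Fin n, ∑ J : Fin k → Fin n,
      gkdelta n (k+1) (Fin.cons j J) (Fin.cons i I) * ∏ a : Fin k, A (I a) (J a)

def dmat (n k : ℕ) (J I : Fin k → Fin n) : Matrix (Fin k) (Fin k) ℝ :=
  Matrix.of fun a b => if J b = I a then (1:ℝ) else 0

lemma gkdelta_eq_det (n k : ℕ) (J I : Fin k → Fin n) :
    gkdelta n k J I = (dmat n k J I).det := by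
  rw [Matrix.det_apply]
  rw [← Equiv.sum_comp (Equiv.inv (Equiv.Perm (Fin k)))]
  unfold gkdelta
  refine Finset.sum_congr rfl fun σ _ => ?_
  simp only [Equiv.inv_apply, Units.smul_def, zsmul_eq_mul]
  rw [Equiv.Perm.sign_inv]
  rw [← Equiv.prod_comp σ (fun b => (dmat n k J I) (σ⁻¹ b) b)]
  congr 1
  refine Finset.prod_congr rfl fun a _ => ?_
  simp [dmat]

lemma gkdelta_perm_left (n k : ℕ) (σ : Equiv.Perm (Fin k)) (J I : Fin k → Fin n) :
    gkdelta n k (J ∘ σ) I = ((Equiv.Perm.sign σ : ℤ) : ℝ) * gkdelta n k J I := by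
  rw [gkdelta_eq_det, gkdelta_eq_det]
  have h : dmat n k (J ∘ σ) I = (dmat n k J I).submatrix id σ := rfl
  rw [h, Matrix.det_permute']


lemma gkdelta_perm_right (n k : ℕ) (σ : Equiv.Perm (Fin k)) (J I : Fin k → Fin n) :
    gkdelta n k J (I ∘ σ) = ((Equiv.Perm.sign σ : ℤ) : ℝ) * gkdelta n k J I := by
  rw [gkdelta_eq_det, gkdelta_eq_det]
  have h : dmat n k J (I ∘ σ) = (dmat n k J I).submatrix σ id := rfl
  rw [h, Matrix.det_permute]


lemma cons_succAbove_cycleRange {α : Type*} {k : ℕ} (c : Fin k) (I : Fin k → α) (e : Fin k) :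
    (Fin.cons (I c) I : Fin (k+1) → α) (c.succ.succAbove (Fin.cycleRange c e)) = I e := by
  rw [Fin.succAbove_cycleRange]
  by_cases h : e = c
  · subst h
    rw [Equiv.swap_apply_right, Fin.cons_zero]
  · rw [Equiv.swap_apply_of_ne_of_ne (Fin.succ_ne_zero e)
      (fun hh => h (Fin.succ_injective _ hh)), Fin.cons_succ]

lemma gkdelta_contract (n k : ℕ) (J I : Fin k → Fin n) :
    ∑ a : Fin n, gkdelta n (k+1) (Fin.cons a J) (Fin.cons a I)
      = ((n:ℝ) - (k:ℝ)) * gkdelta n k J I := by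
  simp only [gkdelta_eq_det]
  set N := dmat n k J I with hN
  have hsq : ∀ nn : ℕ, (-1:ℝ)^nn * (-1:ℝ)^nn = 1 := fun nn => by
    rw [← pow_add]; exact Even.neg_one_pow ⟨nn, by ring⟩
  have key : ∀ a : Fin n,
      (dmat n (k+1) (Fin.cons a J) (Fin.cons a I)).det
        = N.det + ∑ c : Fin k, (if a = I c then -N.det else 0) := by
    intro a
    rw [Matrix.det_succ_column_zero, Fin.sum_univ_succ]
    congr 1
    · have h0 : (dmat n (k+1) (Fin.cons a J) (Fin.cons a I)).submatrix
          (Fin.succAbove 0) Fin.succ = N := by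
        ext d b
        simp [dmat, Matrix.submatrix, Fin.succAbove_zero, N]
      rw [h0]
      simp [dmat]
    · refine Finset.sum_congr rfl fun c _ => ?_
      have hval : (dmat n (k+1) (Fin.cons a J) (Fin.cons a I)) c.succ 0
          = if a = I c then 1 else 0 := by
        simp [dmat, eq_comm]
      by_cases hac : a = I c
      · subst hac
        have h2 : ∀ d, (Fin.cons (I c) I : Fin (k+1) → Fin n) (c.succ.succAbove d)
            = I ((Fin.cycleRange c)⁻¹ d) := by
          intro d
          have := cons_succAbove_cycleRange c I ((Fin.cycleRange c)⁻¹ d)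
          rwa [Equiv.Perm.inv_def, Equiv.apply_symm_apply, ← Equiv.Perm.inv_def] at this
        have h3 : (dmat n (k+1) (Fin.cons (I c) J) (Fin.cons (I c) I)).submatrix
            (c.succ).succAbove Fin.succ
            = N.submatrix (⇑(Fin.cycleRange c)⁻¹) id := by
          ext d b
          simp [dmat, Matrix.submatrix, h2 d, N]
        rw [h3, Matrix.det_permute, hval, if_pos rfl, if_pos rfl]
        have hsgn : ((Equiv.Perm.sign ((Fin.cycleRange c)⁻¹) : ℤ) : ℝ) = (-1:ℝ)^(c:ℕ) := by
          rw [Equiv.Perm.sign_inv, Fin.sign_cycleRange]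
          push_cast
          rfl
        rw [show ((Equiv.Perm.sign ((Fin.cycleRange c)⁻¹) : ℤˣ) : ℝ) * N.det
            = ((Equiv.Perm.sign ((Fin.cycleRange c)⁻¹) : ℤ) : ℝ) * N.det by norm_cast]
        rw [hsgn, Fin.val_succ, pow_succ]
        linear_combination (-(N.det)) * hsq (c : ℕ)
      · rw [hval, if_neg hac, if_neg hac]
        ring
  rw [Finset.sum_congr rfl fun a _ => key a, Finset.sum_add_distrib, Finset.sum_const,
    Finset.card_univ, Fintype.card_fin, Finset.sum_comm]
  simp only [Finset.sum_ite_eq' Finset.univ, Finset.mem_univ, if_true]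
  rw [Finset.sum_const, Finset.card_univ, Fintype.card_fin]
  ring

section aux
variable {n : ℕ}

lemma gkd_swapL_aux {k : ℕ} (x y : Fin n) (t : Fin k → Fin n) :
    (Fin.cons x (Fin.cons y t) : Fin (k+1+1) → Fin n)
      = (Fin.cons y (Fin.cons x t)) ∘ (Equiv.swap (0 : Fin (k+1+1)) 1) := by
  funext a
  refine Fin.cases ?_ (fun b => ?_) a
  · simp only [Function.comp_apply, Equiv.swap_apply_left, Fin.cons_zero]
    rw [← Fin.succ_zero_eq_one, Fin.cons_succ, Fin.cons_zero]
  · refine Fin.cases ?_ (fun d => ?_) b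
    · simp only [Function.comp_apply, Fin.succ_zero_eq_one, Equiv.swap_apply_right,
        Fin.cons_zero]
      rw [← Fin.succ_zero_eq_one, Fin.cons_succ, Fin.cons_zero]
    · have h1 : (d.succ.succ : Fin (k+1+1)) ≠ 0 := Fin.succ_ne_zero _
      have h2 : (d.succ.succ : Fin (k+1+1)) ≠ 1 := by
        rw [← Fin.succ_zero_eq_one]
        intro h
        exact (Fin.succ_ne_zero d) (Fin.succ_injective _ h)
      simp only [Function.comp_apply, Equiv.swap_apply_of_ne_of_ne h1 h2,
        Fin.cons_succ]
end aux

section glue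
variable {n : ℕ}

lemma gkdelta_swap01_left {k : ℕ} (x y : Fin n) (t : Fin k → Fin n)
    (L : Fin (k+1+1) → Fin n) :
    gkdelta n (k+1+1) (Fin.cons x (Fin.cons y t)) L
      = - gkdelta n (k+1+1) (Fin.cons y (Fin.cons x t)) L := by
  rw [gkd_swapL_aux, gkdelta_perm_left, Equiv.Perm.sign_swap (by
    rw [← Fin.succ_zero_eq_one]; exact (Fin.succ_ne_zero 0).symm)]
  push_cast
  ring

lemma gkdelta_swap01_right {k : ℕ} (x y : Fin n) (t : Fin k → Fin n)
    (U : Fin (k+1+1) → Fin n) :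
    gkdelta n (k+1+1) U (Fin.cons x (Fin.cons y t))
      = - gkdelta n (k+1+1) U (Fin.cons y (Fin.cons x t)) := by
  rw [gkd_swapL_aux, gkdelta_perm_right, Equiv.Perm.sign_swap (by
    rw [← Fin.succ_zero_eq_one]; exact (Fin.succ_ne_zero 0).symm)]
  push_cast
  ring

lemma prod_erase_zero {m : ℕ} (f : Fin (m+1) → ℝ) :
    ∏ a ∈ Finset.univ.erase (0 : Fin (m+1)), f a = ∏ b : Fin m, f b.succ := by
  have h : Finset.univ.erase (0 : Fin (m+1)) = Finset.univ.map (Fin.succEmb m) := by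
    ext a
    simp only [Finset.mem_erase, Finset.mem_univ, and_true, Finset.mem_map,
      Fin.succEmb, Function.Embedding.coeFn_mk, true_and]
    exact ⟨fun h => ⟨a.pred h, (Fin.succ_pred a h)⟩, fun ⟨b, hb⟩ => hb ▸ Fin.succ_ne_zero b⟩
  rw [h, Finset.prod_map]
  rfl

lemma sum_cons {m : ℕ} (g : (Fin (m+1) → Fin n) → ℝ) :
    ∑ I : Fin (m+1) → Fin n, g I
      = ∑ p : Fin n, ∑ I : Fin m → Fin n, g (Fin.cons p I) := by
  rw [← Equiv.sum_comp (Fin.consEquiv fun _ : Fin (m+1) => Fin n) g,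
    Fintype.sum_prod_type]
  rfl

lemma sum_swap_head {m : ℕ} (F : Fin n → (Fin (m+1) → Fin n) → ℝ) :
    ∑ j : Fin n, ∑ J : Fin (m+1) → Fin n, F j J
      = ∑ j : Fin n, ∑ J : Fin (m+1) → Fin n, F (J 0) (Fin.cons j (Fin.tail J)) := by
  have hinv : Function.Involutive (fun x : Fin n × (Fin (m+1) → Fin n) =>
      ((x.2 0, Fin.cons x.1 (Fin.tail x.2)) : Fin n × (Fin (m+1) → Fin n))) := by
    intro x
    simp [Fin.tail_cons, Fin.cons_self_tail]
  have h := Fintype.sum_bijective _ hinv.bijective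
    (fun x : Fin n × (Fin (m+1) → Fin n) => F (x.2 0) (Fin.cons x.1 (Fin.tail x.2)))
    (fun x => F x.1 x.2) (fun x => rfl)
  have h1 : ∑ x : Fin n × (Fin (m+1) → Fin n), F x.1 x.2
      = ∑ j : Fin n, ∑ J : Fin (m+1) → Fin n, F j J :=
    Fintype.sum_prod_type (f := fun x : Fin n × (Fin (m+1) → Fin n) => F x.1 x.2)
  have h2 : ∑ x : Fin n × (Fin (m+1) → Fin n), F (x.2 0) (Fin.cons x.1 (Fin.tail x.2))
      = ∑ j : Fin n, ∑ J : Fin (m+1) → Fin n, F (J 0) (Fin.cons j (Fin.tail J)) :=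
    Fintype.sum_prod_type (f := fun x : Fin n × (Fin (m+1) → Fin n) => F (x.2 0) (Fin.cons x.1 (Fin.tail x.2)))
  rw [← h1, ← h2]
  exact h.symm

lemma sum_comm3 {α β γ : Type*} [Fintype α] [Fintype β] [Fintype γ]
    (f : α → β → γ → ℝ) :
    ∑ a : α, ∑ b : β, ∑ c : γ, f a b c = ∑ b : β, ∑ c : γ, ∑ a : α, f a b c := by
  rw [Finset.sum_comm]
  exact Finset.sum_congr rfl fun b _ => Finset.sum_comm

lemma sum_comm4 {α β γ δ : Type*} [Fintype α] [Fintype β] [Fintype γ] [Fintype δ]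
    (f : α → β → γ → δ → ℝ) :
    ∑ a : α, ∑ b : β, ∑ c : γ, ∑ d : δ, f a b c d
      = ∑ b : β, ∑ c : γ, ∑ d : δ, ∑ a : α, f a b c d := by
  rw [Finset.sum_comm]
  exact Finset.sum_congr rfl fun b _ => sum_comm3 _

end glue

noncomputable def Dd (n m : ℕ) (i j : Fin n) (J I : Fin (m+1) → Fin n) : ℝ :=
  gkdelta n (m+1+1) (Fin.cons j J) (Fin.cons i I)

noncomputable def Pp (n m : ℕ) (A : Matrix (Fin n) (Fin n) ℝ)
    (I J : Fin (m+1) → Fin n) : ℝ :=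
  ∏ a ∈ Finset.univ.erase (0 : Fin (m+1)), A (I a) (J a)

lemma Dd_head_swap (n m : ℕ) (i j : Fin n) (J I : Fin (m+1) → Fin n) :
    Dd n m i (J 0) (Fin.cons j (Fin.tail J)) I = - Dd n m i j J I := by
  unfold Dd
  have hD := gkdelta_swap01_left (n := n) (k := m) (J 0) j (Fin.tail J) (Fin.cons i I)
  rw [Fin.cons_self_tail] at hD
  exact hD

lemma Pp_tail (n m : ℕ) (A : Matrix (Fin n) (Fin n) ℝ) (I J : Fin (m+1) → Fin n)
    (j : Fin n) :
    Pp n m A I (Fin.cons j (Fin.tail J)) = Pp n m A I J := by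
  unfold Pp
  rw [prod_erase_zero, prod_erase_zero]
  simp [Fin.cons_succ, Fin.tail]

lemma Pp_cons (n m : ℕ) (A : Matrix (Fin n) (Fin n) ℝ) (p q : Fin n)
    (I J : Fin m → Fin n) :
    Pp n m A (Fin.cons p I) (Fin.cons q J) = ∏ b : Fin m, A (I b) (J b) := by
  unfold Pp
  rw [prod_erase_zero]
  simp [Fin.cons_succ]

lemma Dd_contract2 (n m : ℕ) (i j : Fin n) (I J : Fin m → Fin n) :
    ∑ p : Fin n, Dd n m i j (Fin.cons p J) (Fin.cons p I)
      = ((n:ℝ) - ((m+1:ℕ):ℝ)) * gkdelta n (m+1) (Fin.cons j J) (Fin.cons i I) := by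
  unfold Dd
  have hsw : ∀ p : Fin n,
      gkdelta n (m+1+1) (Fin.cons j (Fin.cons p J)) (Fin.cons i (Fin.cons p I))
        = gkdelta n (m+1+1) (Fin.cons p (Fin.cons j J)) (Fin.cons p (Fin.cons i I)) := by
    intro p
    rw [gkdelta_swap01_left, gkdelta_swap01_right, neg_neg]
  simp only [hsw]
  exact gkdelta_contract n (m+1) (Fin.cons j J) (Fin.cons i I)

lemma Dd_contract1 (n m : ℕ) (i q : Fin n) (I J : Fin m → Fin n) :
    ∑ j : Fin n, Dd n m i j (Fin.cons q J) (Fin.cons j I)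
      = -(((n:ℝ) - ((m+1:ℕ):ℝ)) * gkdelta n (m+1) (Fin.cons q J) (Fin.cons i I)) := by
  unfold Dd
  have hsw : ∀ j : Fin n,
      gkdelta n (m+1+1) (Fin.cons j (Fin.cons q J)) (Fin.cons i (Fin.cons j I))
        = - gkdelta n (m+1+1) (Fin.cons j (Fin.cons q J)) (Fin.cons j (Fin.cons i I)) := by
    intro j
    rw [gkdelta_swap01_right]
  simp only [hsw]
  rw [Finset.sum_neg_distrib, gkdelta_contract n (m+1) (Fin.cons q J) (Fin.cons i I)]

lemma Tcalc2 (n m : ℕ) (i : Fin n) (du : Fin n → ℝ) (A : Matrix (Fin n) (Fin n) ℝ) :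
    (∑ j : Fin n, ∑ I : Fin (m+1) → Fin n, ∑ J : Fin (m+1) → Fin n,
        Dd n m i j J I * (if I 0 = J 0 then du j else 0) * Pp n m A I J)
      = ((n:ℝ) - ((m+1:ℕ):ℝ)) *
          ∑ j : Fin n, du j * ∑ I : Fin m → Fin n, ∑ J : Fin m → Fin n,
            gkdelta n (m+1) (Fin.cons j J) (Fin.cons i I) * ∏ b : Fin m, A (I b) (J b) := by
  simp only [sum_cons (n := n) (m := m)]
  simp only [Fin.cons_zero, Pp_cons]
  simp only [mul_ite, ite_mul, mul_zero, zero_mul]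
  simp only [Finset.sum_ite_irrel, Finset.sum_const_zero, Finset.sum_ite_eq,
    Finset.mem_univ, if_true]
  rw [Finset.mul_sum]
  refine Finset.sum_congr rfl fun j _ => ?_
  rw [sum_comm3]
  simp only [Finset.mul_sum]
  refine Finset.sum_congr rfl fun I _ => Finset.sum_congr rfl fun J _ => ?_
  simp only [← Finset.sum_mul]
  rw [Dd_contract2]
  ring

lemma Tcalc1 (n m : ℕ) (i : Fin n) (du : Fin n → ℝ) (A : Matrix (Fin n) (Fin n) ℝ) :
    (∑ j : Fin n, ∑ I : Fin (m+1) → Fin n, ∑ J : Fin (m+1) → Fin n,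
        Dd n m i j J I * (if I 0 = j then du (J 0) else 0) * Pp n m A I J)
      = -(((n:ℝ) - ((m+1:ℕ):ℝ)) *
          ∑ j : Fin n, du j * ∑ I : Fin m → Fin n, ∑ J : Fin m → Fin n,
            gkdelta n (m+1) (Fin.cons j J) (Fin.cons i I) * ∏ b : Fin m, A (I b) (J b)) := by
  simp only [sum_cons (n := n) (m := m)]
  simp only [Fin.cons_zero, Pp_cons]
  simp only [mul_ite, ite_mul, mul_zero, zero_mul]
  simp only [Finset.sum_ite_irrel, Finset.sum_const_zero, Finset.sum_ite_eq',
    Finset.mem_univ, if_true]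
  -- now : ∑ j, ∑ I, ∑ q, ∑ J, Dd n m i j (cons q J) (cons j I) * du q * Π
  rw [sum_comm4]
  rw [Finset.mul_sum, ← Finset.sum_neg_distrib, Finset.sum_comm]
  refine Finset.sum_congr rfl fun q _ => ?_
  simp only [← Finset.sum_mul]
  simp only [Dd_contract1]
  simp only [neg_mul, Finset.sum_neg_distrib, Finset.mul_sum, mul_neg]
  congr 1
  refine Finset.sum_congr rfl fun I _ => Finset.sum_congr rfl fun J _ => ?_
  ring


/-- divergence of the Newton tensor of the Hessian on `S^n`, in tensorial form
at a point. Here `A` stands for the spherical Hessian `D²u` (a symmetric matrix), `du` for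
the gradient `∇u`, and `B j` for the covariant derivative `∇_j(D²u)` (each symmetric), subject
to the commutation (Ricci) identity on the round sphere
`∇_j u^i_s − ∇_s u^i_j = δ^i_j u_s − δ^i_s u_j` coming from the curvature
`R^{pl}_{sj} = δ^p_s δ^l_j − δ^p_j δ^l_s`. Then
`∇_j [T_m]^j_i(D²u) = −(n−m) u_j [T_{m−1}]^j_i(D²u)`, where the left-hand side is
`(1/(m−1)!) δ^{j j_1…j_m}_{i i_1…i_m} (∇_j u^{i_1}_{j_1}) u^{i_2}_{j_2} ⋯ u^{i_m}_{j_m}`. -/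
theorem div_newton_tensor (n m : ℕ) (hm : 1 ≤ m) (hmn : m ≤ n - 1)
    (du : Fin n → ℝ) (A : Matrix (Fin n) (Fin n) ℝ)
    (B : Fin n → Matrix (Fin n) (Fin n) ℝ)
    (hA : A.IsSymm) (hB : ∀ j, (B j).IsSymm)
    (hcomm : ∀ j i s, B j i s - B s i j
        = (if i = j then du s else 0) - (if i = s then du j else 0)) :
    ∀ i : Fin n,
      (1 / (Nat.factorial (m-1) : ℝ)) *
        ∑ j : Fin n, ∑ I : Fin m → Fin n, ∑ J : Fin m → Fin n,
          gkdelta n (m+1) (Fin.cons j J) (Fin.cons i I) *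
            B j (I ⟨0, hm⟩) (J ⟨0, hm⟩) *
            ∏ a ∈ Finset.univ.erase (⟨0, hm⟩ : Fin m), A (I a) (J a)
      = -((n:ℝ) - (m:ℝ)) * ∑ j : Fin n, du j * newtonT n (m-1) A j i := by
  obtain ⟨m', rfl⟩ : ∃ m', m = m' + 1 := ⟨m - 1, by omega⟩
  intro i
  have h0 : (⟨0, hm⟩ : Fin (m'+1)) = 0 := by ext; simp
  simp only [h0, Nat.add_sub_cancel]
  show 1 / ((Nat.factorial m' : ℝ)) *
      (∑ j : Fin n, ∑ I : Fin (m'+1) → Fin n, ∑ J : Fin (m'+1) → Fin n,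
        Dd n m' i j J I * B j (I 0) (J 0) * Pp n m' A I J)
    = -((n:ℝ) - ((m'+1 : ℕ):ℝ)) * ∑ j : Fin n, du j * newtonT n m' A j i
  set X := (∑ j : Fin n, ∑ I : Fin (m'+1) → Fin n, ∑ J : Fin (m'+1) → Fin n,
      Dd n m' i j J I * B j (I 0) (J 0) * Pp n m' A I J) with hXdef
  have stepA : X = - ∑ j : Fin n, ∑ I : Fin (m'+1) → Fin n, ∑ J : Fin (m'+1) → Fin n,
      Dd n m' i j J I * B (J 0) (I 0) j * Pp n m' A I J := by
    rw [hXdef]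
    rw [Finset.sum_comm]
    conv_rhs => rw [Finset.sum_comm]
    simp only [← Finset.sum_neg_distrib]
    refine Finset.sum_congr rfl fun I _ => ?_
    rw [sum_swap_head (fun j J => Dd n m' i j J I * B j (I 0) (J 0) * Pp n m' A I J)]
    refine Finset.sum_congr rfl fun j _ => Finset.sum_congr rfl fun J _ => ?_
    rw [Dd_head_swap, Pp_tail, Fin.cons_zero]
    ring
  have h2 : 2 * X
      = (∑ j : Fin n, ∑ I : Fin (m'+1) → Fin n, ∑ J : Fin (m'+1) → Fin n,
          Dd n m' i j J I * (if I 0 = j then du (J 0) else 0) * Pp n m' A I J)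
        - (∑ j : Fin n, ∑ I : Fin (m'+1) → Fin n, ∑ J : Fin (m'+1) → Fin n,
          Dd n m' i j J I * (if I 0 = J 0 then du j else 0) * Pp n m' A I J) := by
    have hsub : X - (∑ j : Fin n, ∑ I : Fin (m'+1) → Fin n, ∑ J : Fin (m'+1) → Fin n,
        Dd n m' i j J I * B (J 0) (I 0) j * Pp n m' A I J)
        = (∑ j : Fin n, ∑ I : Fin (m'+1) → Fin n, ∑ J : Fin (m'+1) → Fin n,
          Dd n m' i j J I * (if I 0 = j then du (J 0) else 0) * Pp n m' A I J)
        - (∑ j : Fin n, ∑ I : Fin (m'+1) → Fin n, ∑ J : Fin (m'+1) → Fin n,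
          Dd n m' i j J I * (if I 0 = J 0 then du j else 0) * Pp n m' A I J) := by
      rw [hXdef]
      simp only [← Finset.sum_sub_distrib]
      refine Finset.sum_congr rfl fun j _ => Finset.sum_congr rfl fun I _ =>
        Finset.sum_congr rfl fun J _ => ?_
      linear_combination (Dd n m' i j J I * Pp n m' A I J) * hcomm j (I 0) (J 0)
    rw [← hsub, sub_eq_add_neg, ← stepA]
    ring
  rw [Tcalc1, Tcalc2] at h2
  have hN : ∑ j : Fin n, du j * newtonT n m' A j i
      = 1/((Nat.factorial m' : ℝ)) * ∑ j : Fin n, du j *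
          ∑ I : Fin m' → Fin n, ∑ J : Fin m' → Fin n,
            gkdelta n (m'+1) (Fin.cons j J) (Fin.cons i I) * ∏ b : Fin m', A (I b) (J b) := by
    simp only [newtonT]
    rw [Finset.mul_sum]
    refine Finset.sum_congr rfl fun j _ => ?_
    ring
  rw [hN]
  linear_combination (1 / (2 * (Nat.factorial m' : ℝ))) * h2
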